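/- Let H = H₁ + H₂ where S = ker(H₁) and H₁ ⪰ J·Π_{S⊥} with J > 0 and H₂ Hermitian. Then λ(H) ≥ min(λ(H₂), J − ‖H₂‖). In particular, if every unit vector in S has ⟨v|H₂|v⟩ ≥ β and J ≥ β + ‖H₂‖, then λ(H restricted to S) ≥ β. -/

import Mathlib

open Matrix
open scoped Kronecker Matrix.Norms.L2Operator ComplexOrder

noncomputable section

/-- The positive semidefinite square root, as `Matrix.PosSemidef.sqrt` was defined in Mathlib
(December 2024); the declaration is gone from the current library. -/
noncomputable def Matrix.PosSemidef.sqrt {𝕜 : Type*} [RCLike 𝕜] {n : Type*} [Fintype n]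
    [DecidableEq n] {A : Matrix n n 𝕜} (hA : A.PosSemidef) : Matrix n n 𝕜 :=
  hA.1.eigenvectorUnitary.1 * diagonal ((↑) ∘ Real.sqrt ∘ hA.1.eigenvalues) *
    (star hA.1.eigenvectorUnitary : Matrix n n 𝕜)

/-- Trace norm `‖A‖₁ = tr √(Aᴴ A)`. -/
noncomputable def traceNorm {m : ℕ} (A : Matrix (Fin m) (Fin m) ℂ) : ℝ :=
  ((Matrix.posSemidef_conjTranspose_mul_self A).sqrt.trace).re

/-- Quadratic form `Re ⟨v, H v⟩`. -/
noncomputable def quadForm {m : Type*} [Fintype m] (H : Matrix m m ℂ) (v : m → ℂ) : ℝ :=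
  (dotProduct (star v) (H *ᵥ v)).re

/-- Squared Euclidean norm of a vector. -/
noncomputable def vnormSq {m : Type*} [Fintype m] (v : m → ℂ) : ℝ :=
  (dotProduct (star v) v).re

/-- weak projection lemma: if `S = ker H₁` (projector `Pr`) and
`H₁ ⪰ J·Π_{S⊥}` then `λ(H₁ + H₂) ≥ min(λ(H₂), J − ‖H₂‖)`; and if every unit vector in `S`
has `⟨v|H₂|v⟩ ≥ β` with `J ≥ β + ‖H₂‖`, then `λ((H₁+H₂)|_S) ≥ β`. -/
theorem weak_projection_lemma {n : ℕ} (H₁ H₂ Pr : Matrix (Fin n) (Fin n) ℂ)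
    (hH₁ : H₁.IsHermitian) (hH₂ : H₂.IsHermitian)
    (hPr : Pr.IsHermitian) (hPr2 : Pr * Pr = Pr)
    (hker : ∀ v : Fin n → ℂ, H₁ *ᵥ v = 0 ↔ Pr *ᵥ v = v)
    (J : ℝ) (hJ : 0 < J)
    (hgap : (H₁ - J • ((1 : Matrix (Fin n) (Fin n) ℂ) - Pr)).PosSemidef)
    (lam2 : ℝ)
    (hlam2 : IsLeast {r | ∃ v, vnormSq v = 1 ∧ quadForm H₂ v = r} lam2) :
    (∀ v : Fin n → ℂ, vnormSq v = 1 → min lam2 (J - ‖H₂‖) ≤ quadForm (H₁ + H₂) v) ∧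
    (∀ β : ℝ, (∀ v : Fin n → ℂ, Pr *ᵥ v = v → vnormSq v = 1 → β ≤ quadForm H₂ v) →
      β + ‖H₂‖ ≤ J →
      ∀ v : Fin n → ℂ, Pr *ᵥ v = v → vnormSq v = 1 → β ≤ quadForm (H₁ + H₂) v) := by
  have hQ : ((1 : Matrix (Fin n) (Fin n) ℂ) - Pr).PosSemidef := by
    have h1 : ((1 : Matrix (Fin n) (Fin n) ℂ) - Pr)ᴴ * ((1 : Matrix (Fin n) (Fin n) ℂ) - Pr)
        = (1 : Matrix (Fin n) (Fin n) ℂ) - Pr := by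
      rw [conjTranspose_sub, conjTranspose_one, hPr.eq]
      simp [Matrix.mul_sub, Matrix.sub_mul, hPr2, sub_sub_cancel]
    have := Matrix.posSemidef_conjTranspose_mul_self ((1 : Matrix (Fin n) (Fin n) ℂ) - Pr)
    rwa [h1] at this
  have hH1 : ∀ v : Fin n → ℂ, 0 ≤ quadForm H₁ v := by
    intro v
    have h1 := hgap.re_dotProduct_nonneg v
    have h2 := hQ.re_dotProduct_nonneg v
    simp only [RCLike.re_to_complex] at h1 h2
    have hsplit : (star v ⬝ᵥ H₁ *ᵥ v)
        = star v ⬝ᵥ (H₁ - J • ((1 : Matrix (Fin n) (Fin n) ℂ) - Pr)) *ᵥ v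
          + star v ⬝ᵥ (J • ((1 : Matrix (Fin n) (Fin n) ℂ) - Pr)) *ᵥ v := by
      rw [← dotProduct_add, ← Matrix.add_mulVec, sub_add_cancel]
    have hsm : (star v ⬝ᵥ (J • ((1 : Matrix (Fin n) (Fin n) ℂ) - Pr)) *ᵥ v).re
        = J * (star v ⬝ᵥ ((1 : Matrix (Fin n) (Fin n) ℂ) - Pr) *ᵥ v).re := by
      rw [smul_mulVec, dotProduct_smul, Complex.smul_re, smul_eq_mul]
    have : (star v ⬝ᵥ H₁ *ᵥ v).re
        = (star v ⬝ᵥ (H₁ - J • ((1 : Matrix (Fin n) (Fin n) ℂ) - Pr)) *ᵥ v).re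
          + J * (star v ⬝ᵥ ((1 : Matrix (Fin n) (Fin n) ℂ) - Pr) *ᵥ v).re := by
      rw [hsplit, Complex.add_re, hsm]
    unfold quadForm
    rw [this]
    have := mul_nonneg hJ.le h2
    linarith
  have hadd : ∀ v : Fin n → ℂ, quadForm (H₁ + H₂) v = quadForm H₁ v + quadForm H₂ v := by
    intro v
    unfold quadForm
    rw [Matrix.add_mulVec, dotProduct_add, Complex.add_re]
  constructor
  · intro v hv
    have h2 : lam2 ≤ quadForm H₂ v := hlam2.2 ⟨v, hv, rfl⟩
    have := hH1 v
    rw [hadd]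
    calc min lam2 (J - ‖H₂‖) ≤ lam2 := min_le_left _ _
      _ ≤ quadForm H₁ v + quadForm H₂ v := by linarith
  · intro β hβ _ v hv hv1
    have h0 : H₁ *ᵥ v = 0 := (hker v).mpr hv
    have : quadForm (H₁ + H₂) v = quadForm H₂ v := by
      unfold quadForm
      rw [Matrix.add_mulVec, h0, zero_add]
    rw [this]
    exact hβ v hv hv1
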